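/- For fixed t > 0 and α ∈ (0,1), lim_{ε→0⁺} ∫_ℝ (T_t^α ι_ε)(u) ι_ε(u) du = (4πt)^{−1/2} (1 + (1/(2t)) ∫₀^{+∞} z e^{−z²/(4t) − 2αz} dz), where, writing g_even(x) = (g(x)+g(−x))/2 and g_odd(x) = (g(x)−g(−x))/2, the semigroup is given for x > 0 by (T_t^α g)(x) = (4πt)^{−1/2} { ∫_ℝ e^{−(x−y)²/(4t)} g_even(y) dy + e^{2αx} ∫_x^{+∞} e^{−2αz} ∫₀^{+∞} [((z−y+4αt)/(2t)) e^{−(z−y)²/(4t)} + ((z+y−4αt)/(2t)) e^{−(z+y)²/(4t)}] g_odd(y) dy dz } and by the corresponding reflected formula for x < 0. -/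

import Mathlib

open MeasureTheory Real Filter

/-- The even part of a function. -/
noncomputable def evenPart (g : ℝ → ℝ) (x : ℝ) : ℝ := (g x + g (-x)) / 2

/-- The odd part of a function. -/
noncomputable def oddPart (g : ℝ → ℝ) (x : ℝ) : ℝ := (g x - g (-x)) / 2

/-- The semigroup `T_t^α` of the heat equation with a Robin-type (slow bond, `β = 1`)
condition at the origin, given by its explicit kernel formula. -/
noncomputable def Talpha (t α : ℝ) (g : ℝ → ℝ) (x : ℝ) : ℝ :=
  if 0 < x then
    (Real.sqrt (4 * Real.pi * t))⁻¹ *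
      ((∫ y : ℝ, Real.exp (-(x - y) ^ 2 / (4 * t)) * evenPart g y)
        + Real.exp (2 * α * x) * ∫ z in Set.Ioi x, Real.exp (-2 * α * z) *
            ∫ y in Set.Ioi (0:ℝ),
              (((z - y + 4 * α * t) / (2 * t)) * Real.exp (-(z - y) ^ 2 / (4 * t))
                + ((z + y - 4 * α * t) / (2 * t)) * Real.exp (-(z + y) ^ 2 / (4 * t)))
                * oddPart g y)
  else
    (Real.sqrt (4 * Real.pi * t))⁻¹ *
      ((∫ y : ℝ, Real.exp (-(x - y) ^ 2 / (4 * t)) * evenPart g y)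
        - Real.exp (-2 * α * x) * ∫ z in Set.Ioi (-x), Real.exp (-2 * α * z) *
            ∫ y in Set.Ioi (0:ℝ),
              (((z - y + 4 * α * t) / (2 * t)) * Real.exp (-(z - y) ^ 2 / (4 * t))
                + ((z + y - 4 * α * t) / (2 * t)) * Real.exp (-(z + y) ^ 2 / (4 * t)))
                * oddPart g y)

/-- The approximation of the identity `ι_ε = ε⁻¹ 1_{[0,ε]}`. -/
noncomputable def iotaEps (ε : ℝ) (y : ℝ) : ℝ :=
  ε⁻¹ * (Set.Icc (0:ℝ) ε).indicator (fun _ => (1:ℝ)) y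

open Set

noncomputable def Kk (t α z y : ℝ) : ℝ :=
  ((z - y + 4 * α * t) / (2 * t)) * Real.exp (-(z - y) ^ 2 / (4 * t))
    + ((z + y - 4 * α * t) / (2 * t)) * Real.exp (-(z + y) ^ 2 / (4 * t))

noncomputable def Jd (t z : ℝ) : ℝ := z / (2 * t) * Real.exp (-z ^ 2 / (4 * t))

noncomputable def Mz (t α z : ℝ) : ℝ := 1 / t + (z + 4 * α * t) * (1 + 2 * z) / (4 * t ^ 2)

lemma exp_lip {a b : ℝ} (ha : 0 ≤ a) (hb : 0 ≤ b) :
    |Real.exp (-a) - Real.exp (-b)| ≤ |a - b| := by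
  wlog h : b ≤ a generalizing a b
  · rw [abs_sub_comm, abs_sub_comm a b]; exact this hb ha (le_of_not_ge h)
  have h1 : Real.exp (-a) ≤ Real.exp (-b) := Real.exp_le_exp.2 (by linarith)
  have h2 : Real.exp (-b) ≤ 1 := Real.exp_le_one_iff.2 (by linarith)
  have h3 : -(a - b) + 1 ≤ Real.exp (-(a - b)) := Real.add_one_le_exp _
  have h4 : Real.exp (-(a - b)) ≤ 1 := Real.exp_le_one_iff.2 (by linarith)
  have h5 : Real.exp (-b) * Real.exp (-(a - b)) = Real.exp (-a) := by
    rw [← Real.exp_add]; ring_nf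
  rw [abs_of_nonpos (by linarith), abs_of_nonneg (by linarith)]
  nlinarith [Real.exp_pos (-b)]

lemma Kk_zero {t : ℝ} (α z : ℝ) : Kk t α z 0 = 2 * Jd t z := by
  simp only [Kk, Jd, sub_zero, add_zero]
  ring

lemma Kk_diff_bound {t α z y : ℝ} (ht : 0 < t) (hα : 0 < α) (hz : 0 < z)
    (hy0 : 0 ≤ y) (hy1 : y ≤ 1) :
    |Kk t α z y - Kk t α z 0| ≤ y * Mz t α z := by
  set a := 4 * α * t with ha
  have hapos : 0 < a := by positivity
  set E1 := Real.exp (-(z - y) ^ 2 / (4 * t)) with hE1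
  set E2 := Real.exp (-(z + y) ^ 2 / (4 * t)) with hE2
  set E0 := Real.exp (-z ^ 2 / (4 * t)) with hE0
  have hid : Kk t α z y - Kk t α z 0 =
      ((z + a) / (2 * t)) * (E1 - E0) + ((z - a) / (2 * t)) * (E2 - E0)
        + (y / (2 * t)) * (E2 - E1) := by
    simp only [Kk, sub_zero, add_zero, hE1, hE2, hE0]; ring
  have hd1 : |E1 - E0| ≤ y * (1 + 2 * z) / (4 * t) := by
    have := exp_lip (a := (z - y) ^ 2 / (4 * t)) (b := z ^ 2 / (4 * t))
      (by positivity) (by positivity)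
    have heq : -((z - y) ^ 2 / (4 * t)) = -(z - y) ^ 2 / (4 * t) := by ring
    have heq0 : -(z ^ 2 / (4 * t)) = -z ^ 2 / (4 * t) := by ring
    rw [heq, heq0] at this
    refine le_trans this ?_
    rw [div_sub_div_same, abs_div, abs_of_pos (by positivity : (0:ℝ) < 4 * t)]
    apply div_le_div_of_nonneg_right ?_ (by positivity)
    have : (z - y) ^ 2 - z ^ 2 = y ^ 2 - 2 * z * y := by ring
    rw [this]
    calc |y ^ 2 - 2 * z * y| ≤ |y ^ 2| + |2 * z * y| := abs_sub _ _
      _ ≤ y * (1 + 2 * z) := by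
          rw [abs_of_nonneg (by positivity), abs_of_nonneg (by positivity)]
          nlinarith
  have hd2 : |E2 - E0| ≤ y * (1 + 2 * z) / (4 * t) := by
    have := exp_lip (a := (z + y) ^ 2 / (4 * t)) (b := z ^ 2 / (4 * t))
      (by positivity) (by positivity)
    have heq : -((z + y) ^ 2 / (4 * t)) = -(z + y) ^ 2 / (4 * t) := by ring
    have heq0 : -(z ^ 2 / (4 * t)) = -z ^ 2 / (4 * t) := by ring
    rw [heq, heq0] at this
    refine le_trans this ?_
    rw [div_sub_div_same, abs_div, abs_of_pos (by positivity : (0:ℝ) < 4 * t)]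
    apply div_le_div_of_nonneg_right ?_ (by positivity)
    have : (z + y) ^ 2 - z ^ 2 = y ^ 2 + 2 * z * y := by ring
    rw [this, abs_of_nonneg (by positivity)]
    nlinarith
  have p1 : 0 < E1 := Real.exp_pos _
  have p2 : 0 < E2 := Real.exp_pos _
  have q1 : E1 ≤ 1 :=
    Real.exp_le_one_iff.2 (div_nonpos_of_nonpos_of_nonneg (neg_nonpos.2 (sq_nonneg _))
      (by positivity))
  have q2 : E2 ≤ 1 :=
    Real.exp_le_one_iff.2 (div_nonpos_of_nonpos_of_nonneg (neg_nonpos.2 (sq_nonneg _))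
      (by positivity))
  have hd3 : |E2 - E1| ≤ 2 := abs_le.2 ⟨by linarith, by linarith⟩
  have c1 : |(z + a) / (2 * t)| = (z + a) / (2 * t) := abs_of_nonneg (by positivity)
  have c2 : |(z - a) / (2 * t)| ≤ (z + a) / (2 * t) := by
    rw [abs_div, abs_of_pos (by positivity : (0:ℝ) < 2 * t)]
    exact div_le_div_of_nonneg_right (abs_le.2 ⟨by linarith, by linarith⟩) (by positivity)
  have c3 : |y / (2 * t)| = y / (2 * t) := abs_of_nonneg (by positivity)
  calc |Kk t α z y - Kk t α z 0|
      ≤ |((z + a) / (2 * t)) * (E1 - E0)| + |((z - a) / (2 * t)) * (E2 - E0)|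
        + |(y / (2 * t)) * (E2 - E1)| := by rw [hid]; exact abs_add_three _ _ _
    _ ≤ ((z + a) / (2 * t)) * (y * (1 + 2 * z) / (4 * t))
        + ((z + a) / (2 * t)) * (y * (1 + 2 * z) / (4 * t)) + (y / (2 * t)) * 2 := by
        rw [abs_mul, abs_mul, abs_mul, c1, c3]
        refine add_le_add (add_le_add ?_ ?_) ?_
        · exact mul_le_mul le_rfl hd1 (abs_nonneg _) (by positivity)
        · exact mul_le_mul c2 hd2 (abs_nonneg _) (by positivity)
        · exact mul_le_mul le_rfl hd3 (abs_nonneg _) (by positivity)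
    _ = y * Mz t α z := by
        rw [Mz]; field_simp; ring

lemma intexp {b : ℝ} (hb : 0 < b) :
    IntegrableOn (fun z : ℝ => Real.exp (-b * z)) (Set.Ioi 0) := exp_neg_integrableOn_Ioi 0 hb

lemma intexpz {b : ℝ} (hb : 0 < b) :
    IntegrableOn (fun z : ℝ => Real.exp (-b * z) * z) (Set.Ioi 0) := by
  have hg : IntegrableOn (fun z : ℝ => (2 / b) * Real.exp (-(b / 2) * z)) (Set.Ioi 0) :=
    (exp_neg_integrableOn_Ioi 0 (by linarith : 0 < b / 2)).const_mul _
  refine hg.mono' (Continuous.aestronglyMeasurable (by fun_prop)) ?_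
  rw [ae_restrict_iff' measurableSet_Ioi]
  refine ae_of_all _ fun z hz => ?_
  have hz0 : 0 < z := hz
  have key : z ≤ (2 / b) * Real.exp ((b / 2) * z) := by
    have h1 : (b / 2) * z + 1 ≤ Real.exp ((b / 2) * z) := Real.add_one_le_exp _
    have : (b / 2) * z ≤ Real.exp ((b / 2) * z) := by linarith
    calc z = (2 / b) * ((b / 2) * z) := by field_simp
      _ ≤ (2 / b) * Real.exp ((b / 2) * z) := by
          exact mul_le_mul_of_nonneg_left this (by positivity)
  have hmul : Real.exp (-b * z) * Real.exp ((b / 2) * z) = Real.exp (-(b / 2) * z) := by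
    rw [← Real.exp_add]; ring_nf
  rw [Real.norm_eq_abs, abs_of_nonneg (by positivity)]
  calc Real.exp (-b * z) * z ≤ Real.exp (-b * z) * ((2 / b) * Real.exp ((b / 2) * z)) :=
        mul_le_mul_of_nonneg_left key (Real.exp_pos _).le
    _ = (2 / b) * (Real.exp (-b * z) * Real.exp ((b / 2) * z)) := by ring
    _ = (2 / b) * Real.exp (-(b / 2) * z) := by rw [hmul]

lemma intexpz2 {b : ℝ} (hb : 0 < b) :
    IntegrableOn (fun z : ℝ => Real.exp (-b * z) * z ^ 2) (Set.Ioi 0) := by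
  have hg : IntegrableOn (fun z : ℝ => (16 / b ^ 2) * Real.exp (-(b / 2) * z)) (Set.Ioi 0) :=
    (exp_neg_integrableOn_Ioi 0 (by linarith : 0 < b / 2)).const_mul _
  refine hg.mono' (Continuous.aestronglyMeasurable (by fun_prop)) ?_
  rw [ae_restrict_iff' measurableSet_Ioi]
  refine ae_of_all _ fun z hz => ?_
  have hz0 : 0 < z := hz
  have h1 : (b / 4) * z + 1 ≤ Real.exp ((b / 4) * z) := Real.add_one_le_exp _
  have h2 : (b / 4) * z ≤ Real.exp ((b / 4) * z) := by linarith
  have key : z ^ 2 ≤ (16 / b ^ 2) * Real.exp ((b / 2) * z) := by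
    have hsq : ((b / 4) * z) ^ 2 ≤ (Real.exp ((b / 4) * z)) ^ 2 := by
      apply sq_le_sq' <;> nlinarith [Real.exp_pos ((b / 4) * z)]
    have hexp2 : (Real.exp ((b / 4) * z)) ^ 2 = Real.exp ((b / 2) * z) := by
      rw [← Real.exp_nat_mul]; ring_nf
    rw [← hexp2]
    have hb2 : 0 < b ^ 2 := by positivity
    rw [← sub_nonneg]
    have heq : (16 / b ^ 2) * (Real.exp ((b / 4) * z)) ^ 2 - z ^ 2
        = (16 / b ^ 2) * ((Real.exp ((b / 4) * z)) ^ 2 - ((b / 4) * z) ^ 2) := by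
      field_simp
      ring
    rw [heq]
    have := sub_nonneg.2 hsq
    positivity
  have hmul : Real.exp (-b * z) * Real.exp ((b / 2) * z) = Real.exp (-(b / 2) * z) := by
    rw [← Real.exp_add]; ring_nf
  rw [Real.norm_eq_abs, abs_of_nonneg (by positivity)]
  calc Real.exp (-b * z) * z ^ 2 ≤ Real.exp (-b * z) * ((16 / b ^ 2) * Real.exp ((b / 2) * z)) :=
        mul_le_mul_of_nonneg_left key (Real.exp_pos _).le
    _ = (16 / b ^ 2) * (Real.exp (-b * z) * Real.exp ((b / 2) * z)) := by ring
    _ = (16 / b ^ 2) * Real.exp (-(b / 2) * z) := by rw [hmul]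

lemma int_poly {b c0 c1 c2 : ℝ} (hb : 0 < b) :
    IntegrableOn (fun z : ℝ => Real.exp (-b * z) * (c0 + c1 * z + c2 * z ^ 2)) (Set.Ioi 0) := by
  have h := (((intexp hb).const_mul c0).add ((intexpz hb).const_mul c1)).add
    ((intexpz2 hb).const_mul c2)
  refine h.congr (ae_of_all _ fun z => ?_)
  simp only [Pi.add_apply]
  ring

lemma int_eMz {t α : ℝ} (ht : 0 < t) (hα : 0 < α) :
    IntegrableOn (fun z : ℝ => Real.exp (-2 * α * z) * Mz t α z) (Set.Ioi 0) := by
  have h := int_poly (b := 2 * α) (c0 := 1 / t + (4 * α * t) / (4 * t ^ 2))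
    (c1 := (1 + 2 * (4 * α * t)) / (4 * t ^ 2)) (c2 := 2 / (4 * t ^ 2)) (by linarith)
  refine h.congr (ae_of_all _ fun z => ?_)
  simp only [Mz]
  rw [show -(2 * α) * z = -2 * α * z by ring]
  ring

lemma int_eJd {t α : ℝ} (ht : 0 < t) (hα : 0 < α) :
    IntegrableOn (fun z : ℝ => Real.exp (-2 * α * z) * Jd t z) (Set.Ioi 0) := by
  have hg : IntegrableOn (fun z : ℝ => (1 / (2 * t)) * (Real.exp (-(2 * α) * z) * z))
      (Set.Ioi 0) := (intexpz (by linarith : 0 < 2 * α)).const_mul _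
  refine hg.mono' (Continuous.aestronglyMeasurable (by unfold Jd; fun_prop)) ?_
  rw [ae_restrict_iff' measurableSet_Ioi]
  refine ae_of_all _ fun z hz => ?_
  have hz0 : 0 < z := hz
  have hJd : 0 ≤ Jd t z := by unfold Jd; positivity
  rw [Real.norm_eq_abs, abs_of_nonneg (by positivity)]
  have hle : Jd t z ≤ z / (2 * t) := by
    unfold Jd
    nlinarith [Real.exp_le_one_iff.2 (div_nonpos_of_nonpos_of_nonneg
      (neg_nonpos.2 (sq_nonneg z)) (by positivity : (0:ℝ) ≤ 4 * t)), Real.exp_pos (-z ^ 2 / (4 * t)),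
      div_pos hz0 (by positivity : (0:ℝ) < 2 * t)]
  calc Real.exp (-2 * α * z) * Jd t z ≤ Real.exp (-2 * α * z) * (z / (2 * t)) :=
        mul_le_mul_of_nonneg_left hle (Real.exp_pos _).le
    _ = 1 / (2 * t) * (Real.exp (-(2 * α) * z) * z) := by ring_nf

lemma oddPart_iota {ε y : ℝ} (hε : 0 < ε) (hy : 0 < y) :
    oddPart (iotaEps ε) y = (2 * ε)⁻¹ * (Icc (0:ℝ) ε).indicator (fun _ => (1:ℝ)) y := by
  have hneg : (Icc (0:ℝ) ε).indicator (fun _ => (1:ℝ)) (-y) = 0 := by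
    apply Set.indicator_of_notMem
    simp only [mem_Icc, not_and_or]
    left; linarith
  simp only [oddPart, iotaEps, hneg, mul_zero, sub_zero]
  rw [mul_inv]
  ring

lemma evenPart_iota {ε y : ℝ} (hε : 0 < ε) (hy : y ≠ 0) :
    evenPart (iotaEps ε) y = (2 * ε)⁻¹ * (Icc (-ε) ε).indicator (fun _ => (1:ℝ)) y := by
  have hε' : ε ≠ 0 := ne_of_gt hε
  simp only [evenPart, iotaEps]
  rcases hy.lt_or_gt with h | h
  · have e1 : (Icc (0:ℝ) ε).indicator (fun _ => (1:ℝ)) y = 0 :=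
      Set.indicator_of_notMem (by simp only [mem_Icc, not_and_or]; left; linarith) _
    by_cases hyε : -ε ≤ y
    · have e2 : (Icc (0:ℝ) ε).indicator (fun _ => (1:ℝ)) (-y) = 1 :=
        Set.indicator_of_mem (Set.mem_Icc.2 ⟨by linarith, by linarith⟩) _
      have e3 : (Icc (-ε) ε).indicator (fun _ => (1:ℝ)) y = 1 :=
        Set.indicator_of_mem (Set.mem_Icc.2 ⟨hyε, by linarith⟩) _
      rw [e1, e2, e3]; field_simp; ring
    · have e2 : (Icc (0:ℝ) ε).indicator (fun _ => (1:ℝ)) (-y) = 0 :=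
        Set.indicator_of_notMem (by simp only [mem_Icc, not_and_or]; right; linarith) _
      have e3 : (Icc (-ε) ε).indicator (fun _ => (1:ℝ)) y = 0 :=
        Set.indicator_of_notMem (by simp only [mem_Icc, not_and_or]; left; linarith) _
      rw [e1, e2, e3]; simp
  · have e2 : (Icc (0:ℝ) ε).indicator (fun _ => (1:ℝ)) (-y) = 0 :=
      Set.indicator_of_notMem (by simp only [mem_Icc, not_and_or]; left; linarith) _
    by_cases hyε : y ≤ ε
    · have e1 : (Icc (0:ℝ) ε).indicator (fun _ => (1:ℝ)) y = 1 :=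
        Set.indicator_of_mem (Set.mem_Icc.2 ⟨by linarith, hyε⟩) _
      have e3 : (Icc (-ε) ε).indicator (fun _ => (1:ℝ)) y = 1 :=
        Set.indicator_of_mem (Set.mem_Icc.2 ⟨by linarith, hyε⟩) _
      rw [e1, e2, e3]; field_simp; ring
    · have e1 : (Icc (0:ℝ) ε).indicator (fun _ => (1:ℝ)) y = 0 :=
        Set.indicator_of_notMem (by simp only [mem_Icc, not_and_or]; right; linarith) _
      have e3 : (Icc (-ε) ε).indicator (fun _ => (1:ℝ)) y = 0 :=
        Set.indicator_of_notMem (by simp only [mem_Icc, not_and_or]; right; linarith) _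
      rw [e1, e2, e3]; simp


noncomputable def Aeps (t ε u : ℝ) : ℝ :=
  ∫ y : ℝ, Real.exp (-(u - y) ^ 2 / (4 * t)) * evenPart (iotaEps ε) y

noncomputable def Ieps (t α ε z : ℝ) : ℝ :=
  ∫ y in Set.Ioi (0:ℝ), Kk t α z y * oddPart (iotaEps ε) y

noncomputable def Beps (t α ε u : ℝ) : ℝ :=
  ∫ z in Set.Ioi u, Real.exp (-2 * α * z) * Ieps t α ε z

noncomputable def Jint (t α : ℝ) : ℝ := ∫ z in Set.Ioi (0:ℝ), Real.exp (-2 * α * z) * Jd t z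
noncomputable def CMint (t α : ℝ) : ℝ := ∫ z in Set.Ioi (0:ℝ), Real.exp (-2 * α * z) * Mz t α z
noncomputable def eta (t α ε : ℝ) : ℝ :=
  (1 - Real.exp (-(ε ^ 2 / t))) + Real.exp (2 * α * ε) * (ε * CMint t α / 4 + ε ^ 2 / (4 * t))
    + (Real.exp (2 * α * ε) - 1) * Jint t α

lemma Kk_continuous (t α : ℝ) : Continuous fun p : ℝ × ℝ => Kk t α p.1 p.2 := by
  unfold Kk; fun_prop

lemma Ieps_closed {t α ε : ℝ} (hε : 0 < ε) (z : ℝ) :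
    Ieps t α ε z = (2 * ε)⁻¹ * ∫ y in Set.Ioc (0:ℝ) ε, Kk t α z y := by
  rw [Ieps]
  rw [setIntegral_congr_fun measurableSet_Ioi
    (fun y hy => by rw [oddPart_iota hε hy])]
  have h : ∀ y : ℝ, Kk t α z y * ((2 * ε)⁻¹ * (Icc (0:ℝ) ε).indicator (fun _ => (1:ℝ)) y)
      = (2 * ε)⁻¹ * (Icc (0:ℝ) ε).indicator (fun w => Kk t α z w) y := by
    intro y
    by_cases h : y ∈ Icc (0:ℝ) ε
    · rw [Set.indicator_of_mem h, Set.indicator_of_mem h]; ring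
    · rw [Set.indicator_of_notMem h, Set.indicator_of_notMem h]; ring
  simp_rw [h]
  rw [integral_const_mul, setIntegral_indicator measurableSet_Icc]
  have : Ioi (0:ℝ) ∩ Icc 0 ε = Ioc 0 ε := by
    ext x
    simp only [mem_inter_iff, mem_Ioi, mem_Icc, mem_Ioc]
    constructor
    · rintro ⟨h1, _, h3⟩; exact ⟨h1, h3⟩
    · rintro ⟨h1, h2⟩; exact ⟨h1, le_of_lt h1, h2⟩
  rw [this]

lemma Ieps_err {t α ε z : ℝ} (ht : 0 < t) (hα : 0 < α) (hε : ε ∈ Set.Ioc (0:ℝ) 1)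
    (hz : 0 < z) : |Ieps t α ε z - Jd t z| ≤ ε / 4 * Mz t α z := by
  have hε0 := hε.1
  have hKc : Continuous fun y => Kk t α z y :=
    (Kk_continuous t α).comp (continuous_const.prodMk continuous_id)
  have hKint : IntegrableOn (fun y => Kk t α z y) (Set.Ioc 0 ε) := hKc.integrableOn_Ioc
  have hconst : IntegrableOn (fun _ : ℝ => Kk t α z 0) (Set.Ioc 0 ε) :=
    integrableOn_const (by rw [Real.volume_Ioc]; exact ENNReal.ofReal_lt_top.ne)
  have hJd : Jd t z = (2 * ε)⁻¹ * ∫ _ in Set.Ioc (0:ℝ) ε, Kk t α z 0 := by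
    rw [setIntegral_const, measureReal_def, Real.volume_Ioc, sub_zero, ENNReal.toReal_ofReal hε0.le,
      smul_eq_mul, Kk_zero]
    field_simp
  rw [Ieps_closed hε0, hJd, ← mul_sub, ← integral_sub hKint hconst]
  rw [abs_mul, abs_of_nonneg (by positivity : (0:ℝ) ≤ (2 * ε)⁻¹)]
  have hbound : |∫ y in Set.Ioc (0:ℝ) ε, (Kk t α z y - Kk t α z 0)|
      ≤ ∫ y in Set.Ioc (0:ℝ) ε, y * Mz t α z := by
    have habs : |∫ y in Set.Ioc (0:ℝ) ε, (Kk t α z y - Kk t α z 0)|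
        ≤ ∫ y in Set.Ioc (0:ℝ) ε, |Kk t α z y - Kk t α z 0| := by
      rw [← Real.norm_eq_abs]
      exact (norm_integral_le_integral_norm _).trans (le_of_eq (by simp [Real.norm_eq_abs]))
    refine habs.trans ?_
    refine setIntegral_mono_on ((hKint.sub hconst).abs) ?_ measurableSet_Ioc ?_
    · exact (continuous_id.mul continuous_const).integrableOn_Ioc
    · intro y hy
      exact Kk_diff_bound ht hα hz hy.1.le (hy.2.trans hε.2)
  have hval : ∫ y in Set.Ioc (0:ℝ) ε, y * Mz t α z = ε ^ 2 / 2 * Mz t α z := by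
    rw [integral_mul_const]
    have : ∫ y in Set.Ioc (0:ℝ) ε, y = ∫ y in (0:ℝ)..ε, y := by
      rw [intervalIntegral.integral_of_le hε0.le]
    rw [this, integral_id]
    ring
  calc (2 * ε)⁻¹ * |∫ y in Set.Ioc (0:ℝ) ε, (Kk t α z y - Kk t α z 0)|
      ≤ (2 * ε)⁻¹ * (ε ^ 2 / 2 * Mz t α z) := by
        refine mul_le_mul_of_nonneg_left ?_ (by positivity)
        rw [← hval]; exact hbound
    _ = ε / 4 * Mz t α z := by field_simp; ring

lemma evenPart_iota_ae {ε : ℝ} (hε : 0 < ε) :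
    evenPart (iotaEps ε) =ᵐ[volume]
      fun y => (2 * ε)⁻¹ * (Icc (-ε) ε).indicator (fun _ => (1:ℝ)) y := by
  have h0 : ∀ᵐ y : ℝ ∂volume, y ≠ 0 := by
    have := (Set.countable_singleton (0:ℝ)).ae_notMem volume
    simpa using this
  filter_upwards [h0] with y hy
  exact evenPart_iota hε hy

lemma Aeps_eq {t ε u : ℝ} (hε : 0 < ε) :
    Aeps t ε u = (2 * ε)⁻¹ * ∫ y in Icc (-ε) ε, Real.exp (-(u - y) ^ 2 / (4 * t)) := by
  rw [Aeps]
  have hcong : (fun y => Real.exp (-(u - y) ^ 2 / (4 * t)) * evenPart (iotaEps ε) y)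
      =ᵐ[volume] fun y => Real.exp (-(u - y) ^ 2 / (4 * t)) *
        ((2 * ε)⁻¹ * (Icc (-ε) ε).indicator (fun _ => (1:ℝ)) y) := by
    filter_upwards [evenPart_iota_ae hε] with y hy
    rw [hy]
  rw [integral_congr_ae hcong]
  have h : ∀ y : ℝ, Real.exp (-(u - y) ^ 2 / (4 * t)) *
        ((2 * ε)⁻¹ * (Icc (-ε) ε).indicator (fun _ => (1:ℝ)) y)
      = (2 * ε)⁻¹ * (Icc (-ε) ε).indicator (fun w => Real.exp (-(u - w) ^ 2 / (4 * t))) y := by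
    intro y
    by_cases hm : y ∈ Icc (-ε) ε
    · rw [Set.indicator_of_mem hm, Set.indicator_of_mem hm]; ring
    · rw [Set.indicator_of_notMem hm, Set.indicator_of_notMem hm]; ring
  simp_rw [h]
  rw [integral_const_mul, integral_indicator measurableSet_Icc]

lemma Aeps_bounds {t ε u : ℝ} (ht : 0 < t) (hε : 0 < ε) (hu : u ∈ Icc 0 ε) :
    Real.exp (-(ε ^ 2 / t)) ≤ Aeps t ε u ∧ Aeps t ε u ≤ 1 := by
  rw [Aeps_eq hε]
  have hvol : (volume (Icc (-ε) ε)).toReal = 2 * ε := by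
    rw [Real.volume_Icc, ENNReal.toReal_ofReal (by linarith)]
    ring
  have hint : IntegrableOn (fun y => Real.exp (-(u - y) ^ 2 / (4 * t))) (Icc (-ε) ε) :=
    Continuous.integrableOn_Icc (by fun_prop)
  have hcint : ∀ c : ℝ, IntegrableOn (fun _ : ℝ => c) (Icc (-ε) ε) := fun c =>
    integrableOn_const (by rw [Real.volume_Icc]; exact ENNReal.ofReal_lt_top.ne)
  constructor
  · have hlow : ∫ _ in Icc (-ε) ε, Real.exp (-(ε ^ 2 / t))
        ≤ ∫ y in Icc (-ε) ε, Real.exp (-(u - y) ^ 2 / (4 * t)) := by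
      refine setIntegral_mono_on (hcint _) hint measurableSet_Icc fun y hy => ?_
      refine Real.exp_le_exp.2 ?_
      rw [neg_div, neg_le_neg_iff, div_le_div_iff₀ (by positivity) (by positivity)]
      nlinarith [mul_nonneg (by linarith [hu.2, hy.1] : (0:ℝ) ≤ 2 * ε - (u - y))
        (by linarith [hu.1, hy.2] : (0:ℝ) ≤ 2 * ε + (u - y)), ht.le, ht]
    rw [setIntegral_const, measureReal_def, hvol, smul_eq_mul] at hlow
    calc Real.exp (-(ε ^ 2 / t))
        = (2 * ε)⁻¹ * (2 * ε * Real.exp (-(ε ^ 2 / t))) := by field_simp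
      _ ≤ (2 * ε)⁻¹ * ∫ y in Icc (-ε) ε, Real.exp (-(u - y) ^ 2 / (4 * t)) :=
          mul_le_mul_of_nonneg_left hlow (by positivity)
  · have hup : ∫ y in Icc (-ε) ε, Real.exp (-(u - y) ^ 2 / (4 * t))
        ≤ ∫ _ in Icc (-ε) ε, (1:ℝ) := by
      refine setIntegral_mono_on hint (hcint _) measurableSet_Icc fun y _ => ?_
      exact Real.exp_le_one_iff.2 (div_nonpos_of_nonpos_of_nonneg
        (neg_nonpos.2 (sq_nonneg _)) (by positivity))
    rw [setIntegral_const, measureReal_def, hvol, smul_eq_mul, mul_one] at hup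
    calc (2 * ε)⁻¹ * ∫ y in Icc (-ε) ε, Real.exp (-(u - y) ^ 2 / (4 * t))
        ≤ (2 * ε)⁻¹ * (2 * ε) := mul_le_mul_of_nonneg_left hup (by positivity)
      _ = 1 := by field_simp

-- measurability
lemma Aeps_meas (t ε : ℝ) : StronglyMeasurable fun u => Aeps t ε u := by
  have hev : Measurable (evenPart (iotaEps ε)) := by
    have hι : Measurable (iotaEps ε) :=
      (measurable_const.indicator measurableSet_Icc).const_mul _
    unfold evenPart
    exact ((hι.add (hι.comp measurable_neg)).div_const 2)
  have hf : StronglyMeasurable fun p : ℝ × ℝ =>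
      Real.exp (-(p.1 - p.2) ^ 2 / (4 * t)) * evenPart (iotaEps ε) p.2 := by
    apply Measurable.stronglyMeasurable
    exact ((Continuous.measurable (by fun_prop)).mul (hev.comp measurable_snd))
  exact hf.integral_prod_right'

lemma Ieps_meas {t α ε : ℝ} (hε : 0 < ε) : StronglyMeasurable fun z => Ieps t α ε z := by
  have : (fun z => Ieps t α ε z)
      = fun z => (2 * ε)⁻¹ * ∫ y in Set.Ioc (0:ℝ) ε, Kk t α z y :=
    funext fun z => Ieps_closed hε z
  rw [this]
  exact ((Kk_continuous t α).stronglyMeasurable.integral_prod_right').const_mul _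

lemma Beps_meas {t α ε : ℝ} (hε : 0 < ε) : StronglyMeasurable fun u => Beps t α ε u := by
  set g : ℝ → ℝ := fun z => Real.exp (-2 * α * z) * Ieps t α ε z with hg
  have hgm : Measurable g :=
    (Continuous.measurable (by fun_prop)).mul (Ieps_meas hε).measurable
  have key : StronglyMeasurable fun u => ∫ z, (Ioi u).indicator g z := by
    have hset : MeasurableSet {p : ℝ × ℝ | p.1 < p.2} :=
      measurableSet_lt measurable_fst measurable_snd
    have hf : StronglyMeasurable fun p : ℝ × ℝ => (Ioi p.1).indicator g p.2 := by
      apply Measurable.stronglyMeasurable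
      have : (fun p : ℝ × ℝ => (Ioi p.1).indicator g p.2)
          = {p : ℝ × ℝ | p.1 < p.2}.indicator (fun p => g p.2) := by
        funext p
        by_cases h : p.1 < p.2
        · rw [Set.indicator_of_mem (mem_Ioi.2 h),
            Set.indicator_of_mem (show p ∈ {q : ℝ × ℝ | q.1 < q.2} from h)]
        · rw [Set.indicator_of_notMem (by simpa using h),
            Set.indicator_of_notMem (show p ∉ {q : ℝ × ℝ | q.1 < q.2} from h)]
      rw [this]
      exact (hgm.comp measurable_snd).indicator hset
    exact hf.integral_prod_right'
  have : (fun u => Beps t α ε u) = fun u => ∫ z, (Ioi u).indicator g z := by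
    funext u
    rw [integral_indicator measurableSet_Ioi]
    rfl
  rw [this]
  exact key

lemma Mz_nonneg {t α z : ℝ} (ht : 0 < t) (hα : 0 < α) (hz : 0 < z) : 0 ≤ Mz t α z := by
  unfold Mz; positivity

lemma Jd_nonneg {t z : ℝ} (ht : 0 < t) (hz : 0 ≤ z) : 0 ≤ Jd t z := by
  unfold Jd; positivity

lemma Jint_nonneg {t α : ℝ} (ht : 0 < t) (hα : 0 < α) : 0 ≤ Jint t α := by
  refine setIntegral_nonneg measurableSet_Ioi fun z hz => ?_
  have := Jd_nonneg (z := z) ht (le_of_lt hz)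
  positivity

lemma int_eI {t α ε : ℝ} (ht : 0 < t) (hα : 0 < α) (hε : ε ∈ Set.Ioc (0:ℝ) 1) :
    IntegrableOn (fun z : ℝ => Real.exp (-2 * α * z) * Ieps t α ε z) (Set.Ioi 0) := by
  have hg : IntegrableOn (fun z : ℝ => Real.exp (-2 * α * z) * Jd t z
      + (1 / 4) * (Real.exp (-2 * α * z) * Mz t α z)) (Set.Ioi 0) :=
    (int_eJd ht hα).add ((int_eMz ht hα).const_mul _)
  refine hg.mono' ?_ ?_
  · exact ((Continuous.measurable (by fun_prop)).mul
      (Ieps_meas hε.1).measurable).aestronglyMeasurable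
  · rw [ae_restrict_iff' measurableSet_Ioi]
    refine ae_of_all _ fun z hz => ?_
    have hz0 : (0:ℝ) < z := hz
    have h1 : |Ieps t α ε z| ≤ Jd t z + ε / 4 * Mz t α z := by
      have := Ieps_err ht hα hε hz0
      have habs := abs_sub_abs_le_abs_sub (Ieps t α ε z) (Jd t z)
      have := abs_of_nonneg (Jd_nonneg ht hz0.le)
      linarith [abs_sub_abs_le_abs_sub (Ieps t α ε z) (Jd t z),
        Ieps_err ht hα hε hz0, abs_of_nonneg (Jd_nonneg ht hz0.le)]
    have hMz := Mz_nonneg ht hα hz0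
    have hεM : ε / 4 * Mz t α z ≤ 1 / 4 * Mz t α z := by nlinarith [hε.2, hε.1]
    rw [Real.norm_eq_abs, abs_mul, abs_of_pos (Real.exp_pos _)]
    calc Real.exp (-2 * α * z) * |Ieps t α ε z|
        ≤ Real.exp (-2 * α * z) * (Jd t z + 1 / 4 * Mz t α z) :=
          mul_le_mul_of_nonneg_left (by linarith) (Real.exp_pos _).le
      _ = Real.exp (-2 * α * z) * Jd t z + 1 / 4 * (Real.exp (-2 * α * z) * Mz t α z) := by
          ring

lemma B_err {t α ε u : ℝ} (ht : 0 < t) (hα : 0 < α) (hε : ε ∈ Set.Ioc (0:ℝ) 1)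
    (hu : u ∈ Set.Ioc 0 ε) :
    |Beps t α ε u - Jint t α| ≤ ε * CMint t α / 4 + ε ^ 2 / (4 * t) := by
  have hu0 := hu.1
  have hIu : Set.Ioi u ⊆ Set.Ioi (0:ℝ) := Ioi_subset_Ioi hu0.le
  have h1 : IntegrableOn (fun z : ℝ => Real.exp (-2 * α * z) * Ieps t α ε z) (Set.Ioi u) :=
    (int_eI ht hα hε).mono_set hIu
  have h2 : IntegrableOn (fun z : ℝ => Real.exp (-2 * α * z) * Jd t z) (Set.Ioi u) :=
    (int_eJd ht hα).mono_set hIu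
  have h3 : IntegrableOn (fun z : ℝ => Real.exp (-2 * α * z) * Jd t z) (Set.Ioc 0 u) :=
    (int_eJd ht hα).mono_set Ioc_subset_Ioi_self
  have hsplit : Jint t α = (∫ z in Set.Ioc 0 u, Real.exp (-2 * α * z) * Jd t z)
      + ∫ z in Set.Ioi u, Real.exp (-2 * α * z) * Jd t z := by
    rw [Jint, ← setIntegral_union (Ioc_disjoint_Ioi le_rfl) measurableSet_Ioi h3 h2,
      Ioc_union_Ioi_eq_Ioi hu0.le]
  have hdiff : Beps t α ε u - Jint t α
      = (∫ z in Set.Ioi u, (Real.exp (-2 * α * z) * Ieps t α ε z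
          - Real.exp (-2 * α * z) * Jd t z))
        - ∫ z in Set.Ioc 0 u, Real.exp (-2 * α * z) * Jd t z := by
    rw [Beps, hsplit, integral_sub h1 h2]; ring
  rw [hdiff]
  have hXbound : |∫ z in Set.Ioi u, (Real.exp (-2 * α * z) * Ieps t α ε z
      - Real.exp (-2 * α * z) * Jd t z)| ≤ ε * CMint t α / 4 := by
    have habs : |∫ z in Set.Ioi u, (Real.exp (-2 * α * z) * Ieps t α ε z
        - Real.exp (-2 * α * z) * Jd t z)|
        ≤ ∫ z in Set.Ioi u, |Real.exp (-2 * α * z) * Ieps t α ε z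
          - Real.exp (-2 * α * z) * Jd t z| := by
      rw [← Real.norm_eq_abs]
      exact (norm_integral_le_integral_norm _).trans (le_of_eq (by simp [Real.norm_eq_abs]))
    refine habs.trans ?_
    have hstep : ∫ z in Set.Ioi u, |Real.exp (-2 * α * z) * Ieps t α ε z
          - Real.exp (-2 * α * z) * Jd t z|
        ≤ ∫ z in Set.Ioi u, (ε / 4) * (Real.exp (-2 * α * z) * Mz t α z) := by
      refine setIntegral_mono_on ((h1.sub h2).abs)
        (IntegrableOn.mono_set ((int_eMz ht hα).const_mul (ε / 4)) hIu)
        measurableSet_Ioi fun z hz => ?_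
      have hz0 : (0:ℝ) < z := hu0.trans hz
      rw [← mul_sub, abs_mul, abs_of_pos (Real.exp_pos _)]
      calc Real.exp (-2 * α * z) * |Ieps t α ε z - Jd t z|
          ≤ Real.exp (-2 * α * z) * (ε / 4 * Mz t α z) :=
            mul_le_mul_of_nonneg_left (Ieps_err ht hα hε hz0) (Real.exp_pos _).le
        _ = ε / 4 * (Real.exp (-2 * α * z) * Mz t α z) := by ring
    refine hstep.trans ?_
    have hmono : ∫ z in Set.Ioi u, (ε / 4) * (Real.exp (-2 * α * z) * Mz t α z)
        ≤ ∫ z in Set.Ioi (0:ℝ), (ε / 4) * (Real.exp (-2 * α * z) * Mz t α z) := by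
      refine setIntegral_mono_set ((int_eMz ht hα).const_mul _) ?_
        (HasSubset.Subset.eventuallyLE hIu)
      rw [EventuallyLE, ae_restrict_iff' measurableSet_Ioi]
      refine ae_of_all _ fun z hz => ?_
      have hz0 : (0:ℝ) < z := hz
      have hM := Mz_nonneg ht hα hz0
      simp only [Pi.zero_apply]
      exact mul_nonneg (by linarith [hε.1]) (mul_nonneg (Real.exp_pos _).le hM)
    refine hmono.trans (le_of_eq ?_)
    rw [integral_const_mul, CMint]
    ring
  have hYnn : 0 ≤ ∫ z in Set.Ioc 0 u, Real.exp (-2 * α * z) * Jd t z := by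
    refine setIntegral_nonneg measurableSet_Ioc fun z hz => ?_
    have := Jd_nonneg ht hz.1.le
    positivity
  have hYbound : ∫ z in Set.Ioc 0 u, Real.exp (-2 * α * z) * Jd t z ≤ ε ^ 2 / (4 * t) := by
    have hstep : ∫ z in Set.Ioc 0 u, Real.exp (-2 * α * z) * Jd t z
        ≤ ∫ z in Set.Ioc 0 u, z * (1 / (2 * t)) := by
      refine setIntegral_mono_on h3
        ((continuous_id.mul continuous_const).integrableOn_Ioc) measurableSet_Ioc
        fun z hz => ?_
      have hz0 : (0:ℝ) < z := hz.1
      have he1 : Real.exp (-2 * α * z) ≤ 1 :=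
        Real.exp_le_one_iff.2 (by nlinarith)
      have hJd1 : Jd t z ≤ z * (1 / (2 * t)) := by
        unfold Jd
        have he2 : Real.exp (-z ^ 2 / (4 * t)) ≤ 1 :=
          Real.exp_le_one_iff.2 (div_nonpos_of_nonpos_of_nonneg
            (neg_nonpos.2 (sq_nonneg _)) (by positivity))
        have hzt : (0:ℝ) ≤ z / (2 * t) := by positivity
        calc z / (2 * t) * Real.exp (-z ^ 2 / (4 * t)) ≤ z / (2 * t) * 1 :=
              mul_le_mul_of_nonneg_left he2 hzt
          _ = z * (1 / (2 * t)) := by ring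
      have := Jd_nonneg ht hz0.le
      nlinarith [Real.exp_pos (-2 * α * z)]
    refine hstep.trans ?_
    rw [integral_mul_const]
    have : ∫ z in Set.Ioc (0:ℝ) u, z = ∫ z in (0:ℝ)..u, z := by
      rw [intervalIntegral.integral_of_le hu0.le]
    rw [this, integral_id]
    have hu2 : u ^ 2 ≤ ε ^ 2 := by nlinarith [hu.1, hu.2]
    rw [div_eq_mul_one_div (ε ^2) (4*t)]
    calc (u ^ 2 - 0 ^ 2) / 2 * (1 / (2 * t)) = u ^ 2 * (1 / (4 * t)) := by ring
      _ ≤ ε ^ 2 * (1 / (4 * t)) := by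
          refine mul_le_mul_of_nonneg_right hu2 (by positivity)
      _ = ε ^ 2 * (1 / (4 * t)) := rfl
  calc |(∫ z in Set.Ioi u, (Real.exp (-2 * α * z) * Ieps t α ε z
          - Real.exp (-2 * α * z) * Jd t z))
        - ∫ z in Set.Ioc 0 u, Real.exp (-2 * α * z) * Jd t z|
      ≤ |∫ z in Set.Ioi u, (Real.exp (-2 * α * z) * Ieps t α ε z
          - Real.exp (-2 * α * z) * Jd t z)|
        + |∫ z in Set.Ioc 0 u, Real.exp (-2 * α * z) * Jd t z| := abs_sub _ _
    _ ≤ ε * CMint t α / 4 + ε ^ 2 / (4 * t) := by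
        rw [abs_of_nonneg hYnn]
        exact add_le_add hXbound hYbound

lemma CMint_nonneg {t α : ℝ} (ht : 0 < t) (hα : 0 < α) : 0 ≤ CMint t α := by
  refine setIntegral_nonneg measurableSet_Ioi fun z hz => ?_
  have := Mz_nonneg ht hα (show (0:ℝ) < z from hz)
  positivity

lemma sqrtc_pos {t : ℝ} (ht : 0 < t) : 0 < (Real.sqrt (4 * Real.pi * t))⁻¹ := by
  have h := Real.pi_pos
  have : 0 < Real.sqrt (4 * Real.pi * t) := Real.sqrt_pos.2 (by positivity)
  positivity

lemma Talpha_pos_eq {t α ε u : ℝ} (hu : 0 < u) :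
    Talpha t α (iotaEps ε) u = (Real.sqrt (4 * Real.pi * t))⁻¹ *
      (Aeps t ε u + Real.exp (2 * α * u) * Beps t α ε u) := by
  rw [Talpha, if_pos hu]; rfl

lemma T_err {t α ε u : ℝ} (ht : 0 < t) (hα : 0 < α) (hε : ε ∈ Set.Ioc (0:ℝ) 1)
    (hu : u ∈ Set.Ioc 0 ε) :
    |Talpha t α (iotaEps ε) u
        - (Real.sqrt (4 * Real.pi * t))⁻¹ * (1 + Jint t α)|
      ≤ (Real.sqrt (4 * Real.pi * t))⁻¹ * eta t α ε := by
  have hc := sqrtc_pos ht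
  rw [Talpha_pos_eq hu.1]
  have hA := Aeps_bounds ht hε.1 ⟨hu.1.le, hu.2⟩
  have hB := B_err ht hα hε hu
  have hJn := Jint_nonneg ht hα
  have he1 : Real.exp (-(ε ^ 2 / t)) ≤ 1 :=
    Real.exp_le_one_iff.2 (neg_nonpos.2 (by positivity))
  have hexpu : Real.exp (2 * α * u) ≤ Real.exp (2 * α * ε) :=
    Real.exp_le_exp.2 (by nlinarith [hu.2, hu.1])
  have hexpu1 : 1 ≤ Real.exp (2 * α * u) := Real.one_le_exp (by nlinarith [hu.1])
  have hd1 : |Aeps t ε u - 1| ≤ 1 - Real.exp (-(ε ^ 2 / t)) :=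
    abs_le.2 ⟨by linarith [hA.1], by linarith [hA.2]⟩
  have hd2 : |Real.exp (2 * α * u) * Beps t α ε u - Jint t α|
      ≤ Real.exp (2 * α * ε) * (ε * CMint t α / 4 + ε ^ 2 / (4 * t))
        + (Real.exp (2 * α * ε) - 1) * Jint t α := by
    have hid : Real.exp (2 * α * u) * Beps t α ε u - Jint t α
        = Real.exp (2 * α * u) * (Beps t α ε u - Jint t α)
          + (Real.exp (2 * α * u) - 1) * Jint t α := by ring
    rw [hid]
    calc |Real.exp (2 * α * u) * (Beps t α ε u - Jint t α)
          + (Real.exp (2 * α * u) - 1) * Jint t α|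
        ≤ |Real.exp (2 * α * u) * (Beps t α ε u - Jint t α)|
          + |(Real.exp (2 * α * u) - 1) * Jint t α| := abs_add_le _ _
      _ ≤ Real.exp (2 * α * ε) * (ε * CMint t α / 4 + ε ^ 2 / (4 * t))
          + (Real.exp (2 * α * ε) - 1) * Jint t α := by
          rw [abs_mul, abs_mul, abs_of_pos (Real.exp_pos _),
            abs_of_nonneg (by linarith : (0:ℝ) ≤ Real.exp (2 * α * u) - 1),
            abs_of_nonneg hJn]
          refine add_le_add ?_ ?_
          · exact mul_le_mul hexpu hB (abs_nonneg _) (Real.exp_pos _).le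
          · exact mul_le_mul_of_nonneg_right (by linarith) hJn
  have hkey : (Real.sqrt (4 * Real.pi * t))⁻¹ *
        (Aeps t ε u + Real.exp (2 * α * u) * Beps t α ε u)
      - (Real.sqrt (4 * Real.pi * t))⁻¹ * (1 + Jint t α)
      = (Real.sqrt (4 * Real.pi * t))⁻¹ * ((Aeps t ε u - 1)
        + (Real.exp (2 * α * u) * Beps t α ε u - Jint t α)) := by ring
  rw [hkey, abs_mul, abs_of_pos hc]
  refine mul_le_mul_of_nonneg_left ?_ hc.le
  calc |(Aeps t ε u - 1) + (Real.exp (2 * α * u) * Beps t α ε u - Jint t α)|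
      ≤ |Aeps t ε u - 1| + |Real.exp (2 * α * u) * Beps t α ε u - Jint t α| := abs_add_le _ _
    _ ≤ eta t α ε := by rw [eta]; linarith

lemma eta_nonneg {t α ε : ℝ} (ht : 0 < t) (hα : 0 < α) (hε : ε ∈ Set.Ioc (0:ℝ) 1) :
    0 ≤ eta t α ε := by
  have he1 : Real.exp (-(ε ^ 2 / t)) ≤ 1 :=
    Real.exp_le_one_iff.2 (neg_nonpos.2 (by positivity))
  have h2 : (1:ℝ) ≤ Real.exp (2 * α * ε) := Real.one_le_exp (by nlinarith [hε.1])
  have h3 := CMint_nonneg ht hα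
  have h4 := Jint_nonneg ht hα
  have h5 : 0 ≤ ε * CMint t α / 4 + ε ^ 2 / (4 * t) := by
    have := hε.1
    positivity
  rw [eta]
  nlinarith

lemma F_err {t α ε : ℝ} (ht : 0 < t) (hα : 0 < α) (hε : ε ∈ Set.Ioc (0:ℝ) 1) :
    |(∫ u : ℝ, Talpha t α (iotaEps ε) u * iotaEps ε u)
        - (Real.sqrt (4 * Real.pi * t))⁻¹ * (1 + Jint t α)|
      ≤ (Real.sqrt (4 * Real.pi * t))⁻¹ * eta t α ε := by
  have hε0 := hε.1
  have hc := sqrtc_pos ht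
  set L := (Real.sqrt (4 * Real.pi * t))⁻¹ * (1 + Jint t α) with hL
  set D := (Real.sqrt (4 * Real.pi * t))⁻¹ * eta t α ε with hD
  have hD0 : 0 ≤ D := mul_nonneg hc.le (eta_nonneg ht hα hε)
  have h1 : (fun u : ℝ => Talpha t α (iotaEps ε) u * iotaEps ε u)
      = fun u => ε⁻¹ * (Icc (0:ℝ) ε).indicator (fun w => Talpha t α (iotaEps ε) w) u := by
    funext u
    rw [iotaEps]
    by_cases hm : u ∈ Icc (0:ℝ) ε
    · rw [Set.indicator_of_mem hm, Set.indicator_of_mem hm]; ring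
    · rw [Set.indicator_of_notMem hm, Set.indicator_of_notMem hm]; ring
  rw [h1, integral_const_mul, integral_indicator measurableSet_Icc,
    integral_Icc_eq_integral_Ioc]
  -- integrability of T on Ioc 0 ε
  have hvol : (volume (Ioc (0:ℝ) ε)).toReal = ε := by
    rw [Real.volume_Ioc, sub_zero, ENNReal.toReal_ofReal hε0.le]
  have hvolfin : volume (Ioc (0:ℝ) ε) < ⊤ := by
    rw [Real.volume_Ioc]; exact ENNReal.ofReal_lt_top
  have hfununf : StronglyMeasurable fun u => (Real.sqrt (4 * Real.pi * t))⁻¹ *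
      (Aeps t ε u + Real.exp (2 * α * u) * Beps t α ε u) := by
    refine StronglyMeasurable.const_mul ?_ _
    exact (Aeps_meas t ε).add (((Continuous.stronglyMeasurable (by fun_prop))).mul
      (Beps_meas hε0))
  have hcongr : ∀ᵐ u ∂(volume.restrict (Ioc (0:ℝ) ε)),
      Talpha t α (iotaEps ε) u = (Real.sqrt (4 * Real.pi * t))⁻¹ *
        (Aeps t ε u + Real.exp (2 * α * u) * Beps t α ε u) :=
    (ae_restrict_iff' measurableSet_Ioc).2 (ae_of_all _ fun u hu => Talpha_pos_eq hu.1)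
  have haesm : AEStronglyMeasurable (fun u => Talpha t α (iotaEps ε) u)
      (volume.restrict (Ioc (0:ℝ) ε)) :=
    hfununf.aestronglyMeasurable.congr (Filter.EventuallyEq.symm hcongr)
  have hT : IntegrableOn (fun u => Talpha t α (iotaEps ε) u) (Ioc (0:ℝ) ε) := by
    refine Integrable.mono' (g := fun _ => |L| + D)
      (integrableOn_const hvolfin.ne) haesm ?_
    rw [ae_restrict_iff' measurableSet_Ioc]
    refine ae_of_all _ fun u hu => ?_
    have := T_err ht hα hε hu
    rw [Real.norm_eq_abs]
    calc |Talpha t α (iotaEps ε) u| ≤ |L| + |Talpha t α (iotaEps ε) u - L| := by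
          have := abs_add_le L (Talpha t α (iotaEps ε) u - L)
          simpa using this
      _ ≤ |L| + D := by rw [hD]; linarith
  have hconst : IntegrableOn (fun _ : ℝ => L) (Ioc (0:ℝ) ε) :=
    integrableOn_const hvolfin.ne
  have hval : ∫ u in Ioc (0:ℝ) ε, (Talpha t α (iotaEps ε) u - L) =
      (∫ u in Ioc (0:ℝ) ε, Talpha t α (iotaEps ε) u) - ε * L := by
    rw [integral_sub hT hconst, setIntegral_const, measureReal_def, hvol, smul_eq_mul]
  have hbnd : |∫ u in Ioc (0:ℝ) ε, (Talpha t α (iotaEps ε) u - L)| ≤ D * ε := by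
    have hbnd' : ‖∫ u in Ioc (0:ℝ) ε, (Talpha t α (iotaEps ε) u - L)‖
        ≤ D * (volume (Ioc (0:ℝ) ε)).toReal := by
      refine norm_setIntegral_le_of_norm_le_const hvolfin (fun u hu => ?_)
      rw [Real.norm_eq_abs]
      exact T_err ht hα hε hu
    rwa [Real.norm_eq_abs, hvol] at hbnd'
  have hfinal : ε⁻¹ * (∫ u in Ioc (0:ℝ) ε, Talpha t α (iotaEps ε) u) - L
      = ε⁻¹ * ∫ u in Ioc (0:ℝ) ε, (Talpha t α (iotaEps ε) u - L) := by
    rw [hval]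
    field_simp
  rw [hfinal, abs_mul, abs_of_pos (by positivity : (0:ℝ) < ε⁻¹)]
  calc ε⁻¹ * |∫ u in Ioc (0:ℝ) ε, (Talpha t α (iotaEps ε) u - L)|
      ≤ ε⁻¹ * (D * ε) := mul_le_mul_of_nonneg_left hbnd (by positivity)
    _ = D := by field_simp

/-- for the slow-bond semigroup `T_t^α` (`β = 1`),
`lim_{ε→0⁺} ∫_ℝ (T_t^α ι_ε)(u) ι_ε(u) du
 = (4πt)^{−1/2} (1 + (1/(2t)) ∫₀^∞ z e^{−z²/(4t) − 2αz} dz)`. -/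
theorem Talpha_average_limit (t α : ℝ) (ht : 0 < t) (hα : α ∈ Set.Ioo (0:ℝ) 1) :
    Filter.Tendsto (fun ε : ℝ => ∫ u : ℝ, Talpha t α (iotaEps ε) u * iotaEps ε u)
      (nhdsWithin 0 (Set.Ioi 0))
      (nhds ((Real.sqrt (4 * Real.pi * t))⁻¹ *
        (1 + (1 / (2 * t)) *
          ∫ z in Set.Ioi (0:ℝ), z * Real.exp (-z ^ 2 / (4 * t) - 2 * α * z)))) := by
  obtain ⟨hα0, hα1⟩ := hα
  have hJeq : (1 / (2 * t)) *
      ∫ z in Set.Ioi (0:ℝ), z * Real.exp (-z ^ 2 / (4 * t) - 2 * α * z) = Jint t α := by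
    have h1 : ∫ z in Set.Ioi (0:ℝ), Real.exp (-2 * α * z) * Jd t z
        = ∫ z in Set.Ioi (0:ℝ), (1 / (2 * t)) * (z * Real.exp (-z ^ 2 / (4 * t) - 2 * α * z)) :=
      setIntegral_congr_fun measurableSet_Ioi (fun z _ => by
        simp only [Jd]
        rw [show -z ^ 2 / (4 * t) - 2 * α * z = -z ^ 2 / (4 * t) + -(2 * α * z) by ring,
          Real.exp_add]
        ring)
    rw [Jint, h1, integral_const_mul]
  rw [hJeq]
  refine tendsto_iff_dist_tendsto_zero.2 ?_
  have hcont : Continuous fun ε : ℝ => (Real.sqrt (4 * Real.pi * t))⁻¹ * eta t α ε := by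
    unfold eta; fun_prop
  have h0 : (Real.sqrt (4 * Real.pi * t))⁻¹ * eta t α 0 = 0 := by
    simp [eta]
  have hDlim : Tendsto (fun ε : ℝ => (Real.sqrt (4 * Real.pi * t))⁻¹ * eta t α ε)
      (nhdsWithin 0 (Set.Ioi 0)) (nhds 0) := by
    have h := hcont.tendsto 0
    rw [h0] at h
    exact h.mono_left nhdsWithin_le_nhds
  refine squeeze_zero' ?_ ?_ hDlim
  · exact Eventually.of_forall fun _ => dist_nonneg
  · filter_upwards [Ioc_mem_nhdsGT_of_mem (show (0:ℝ) ∈ Set.Ico 0 1 by norm_num)] with ε hε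
    rw [Real.dist_eq]
    exact F_err ht hα0 hε
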